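/- The series ∑_{k=2}^∞ (ζ(k) − 1)/k converges and equals 1 − γ, where γ is the Euler–Mascheroni constant (Euler's formula). -/

import Mathlib

/-- The Riemann zeta function at a natural argument, `ζ(s) = ∑_{n=1}^∞ 1/n^s`. -/
noncomputable def zetaNat (s : ℕ) : ℝ := ∑' n : ℕ, 1 / ((n : ℝ) + 1) ^ s

open Filter Real Finset

/-- Inner sum over `k` for fixed `n`. -/
lemma aux_fiber_n (n : ℕ) :
    HasSum (fun k : ℕ => (1 / ((n : ℝ) + 2)) ^ (k + 2) / ((k : ℝ) + 2))
      (Real.log ((n : ℝ) + 2) - Real.log ((n : ℝ) + 1) - 1 / ((n : ℝ) + 2)) := by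
  have hn0 : (0:ℝ) < (n:ℝ) + 2 := by positivity
  have hnn : (0:ℝ) ≤ (n:ℝ) := n.cast_nonneg
  set x : ℝ := 1 / ((n : ℝ) + 2) with hxdef
  have hxpos : 0 < x := by positivity
  have hx1 : x < 1 := by rw [hxdef, div_lt_one hn0]; linarith
  have hx : |x| < 1 := by rw [abs_of_pos hxpos]; exact hx1
  have h := hasSum_pow_div_log_of_abs_lt_one hx
  have h2 := (hasSum_nat_add_iff' (f := fun m : ℕ => x ^ (m + 1) / ((m : ℝ) + 1)) 1).2 h
  have hsum1 : ∑ i ∈ Finset.range 1, x ^ (i + 1) / ((i : ℝ) + 1) = x := by simp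
  have h1x : 1 - x = ((n : ℝ) + 1) / ((n : ℝ) + 2) := by
    rw [hxdef]; field_simp; ring
  have hlog : -Real.log (1 - x) = Real.log ((n : ℝ) + 2) - Real.log ((n : ℝ) + 1) := by
    rw [h1x, Real.log_div (by positivity) (by positivity)]; ring
  rw [hsum1, hlog] at h2
  refine h2.congr_fun fun k => ?_
  push_cast
  ring_nf

/-- Inner sum over `n` for fixed `k`. -/
lemma aux_fiber_k (k : ℕ) :
    HasSum (fun n : ℕ => (1 / ((n : ℝ) + 2)) ^ (k + 2) / ((k : ℝ) + 2))
      ((zetaNat (k + 2) - 1) / ((k : ℝ) + 2)) := by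
  have hsum : Summable (fun n : ℕ => 1 / ((n : ℝ) + 1) ^ (k + 2)) := by
    have := (Real.summable_one_div_nat_pow (p := k + 2)).2 (by omega)
    have := (summable_nat_add_iff (f := fun n : ℕ => 1 / (n : ℝ) ^ (k + 2)) 1).2 this
    exact this.congr fun n => by push_cast; ring_nf
  have hS : HasSum (fun n : ℕ => 1 / ((n : ℝ) + 1) ^ (k + 2)) (zetaNat (k + 2)) :=
    hsum.hasSum
  have h2 := (hasSum_nat_add_iff' (f := fun n : ℕ => 1 / ((n : ℝ) + 1) ^ (k + 2)) 1).2 hS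
  have hval : zetaNat (k + 2) - ∑ i ∈ Finset.range 1, 1 / ((i : ℝ) + 1) ^ (k + 2)
      = zetaNat (k + 2) - 1 := by simp
  rw [hval] at h2
  have h3 : HasSum (fun n : ℕ => (1 / ((n : ℝ) + 2)) ^ (k + 2)) (zetaNat (k + 2) - 1) := by
    refine h2.congr_fun fun n => ?_
    rw [div_pow, one_pow]
    push_cast
    ring_nf
  exact h3.div_const _

/-- Euler's formula: `∑_{k=2}^∞ (ζ(k) − 1)/k = 1 − γ`. -/
theorem euler_formula :
    HasSum (fun k : ℕ => (zetaNat (k + 2) - 1) / ((k : ℝ) + 2))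
      (1 - Real.eulerMascheroniConstant) := by
  set F : ℕ × ℕ → ℝ := fun p => (1 / ((p.1 : ℝ) + 2)) ^ (p.2 + 2) / ((p.2 : ℝ) + 2) with hF
  set g : ℕ → ℝ := fun n =>
    Real.log ((n : ℝ) + 2) - Real.log ((n : ℝ) + 1) - 1 / ((n : ℝ) + 2) with hg
  have hFnonneg : 0 ≤ F := fun p => by positivity
  -- bound : g n ≤ 1/((n+1)^2)
  have hgle : ∀ n : ℕ, g n ≤ 1 / ((n : ℝ) + 1) ^ 2 := by
    intro n
    have hn0 : (0:ℝ) < (n:ℝ) + 2 := by positivity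
    have hnn : (0:ℝ) ≤ (n:ℝ) := n.cast_nonneg
    set x : ℝ := 1 / ((n : ℝ) + 2) with hxdef
    have hxpos : 0 < x := by positivity
    have hx1 : x < 1 := by rw [hxdef, div_lt_one hn0]; linarith
    have hgeo : HasSum (fun k : ℕ => x ^ 2 * x ^ k) (x ^ 2 * (1 - x)⁻¹) :=
      (hasSum_geometric_of_lt_one hxpos.le hx1).mul_left _
    have hle : g n ≤ x ^ 2 * (1 - x)⁻¹ := by
      refine hasSum_le (fun k => ?_) (aux_fiber_n n) hgeo
      have hkn : (0:ℝ) ≤ (k:ℝ) := k.cast_nonneg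
      have h1 : x ^ (k + 2) / ((k : ℝ) + 2) ≤ x ^ (k + 2) := by
        rw [div_le_iff₀ (by positivity)]
        nlinarith [pow_pos hxpos (k + 2)]
      calc x ^ (k + 2) / ((k : ℝ) + 2) ≤ x ^ (k + 2) := h1
        _ = x ^ 2 * x ^ k := by ring
    refine hle.trans ?_
    have h1x : 1 - x = ((n : ℝ) + 1) / ((n : ℝ) + 2) := by rw [hxdef]; field_simp; ring
    rw [h1x, hxdef, div_pow, one_pow, inv_div, div_mul_div_comm, one_mul,
      div_le_div_iff₀ (by positivity) (by positivity)]
    nlinarith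
  have hgnonneg : ∀ n, 0 ≤ g n := fun n =>
    hasSum_le (fun k => by positivity) hasSum_zero (aux_fiber_n n)
  have hgsummable : Summable g := by
    refine Summable.of_nonneg_of_le hgnonneg hgle ?_
    have := (Real.summable_one_div_nat_pow (p := 2)).2 one_lt_two
    have := (summable_nat_add_iff (f := fun n : ℕ => 1 / (n : ℝ) ^ 2) 1).2 this
    exact this.congr fun n => by push_cast; ring_nf
  -- summability of the double series
  have hFsummable : Summable F := by
    rw [summable_prod_of_nonneg hFnonneg]
    refine ⟨fun n => (aux_fiber_n n).summable, ?_⟩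
    refine hgsummable.congr fun n => ?_
    exact ((aux_fiber_n n).tsum_eq).symm
  set S : ℝ := ∑' p, F p with hSdef
  have hFsum : HasSum F S := hFsummable.hasSum
  have hgS : HasSum g S := hFsum.prod_fiberwise fun n => aux_fiber_n n
  -- compute S = 1 - γ via partial sums of g
  have hpartial : ∀ N : ℕ, ∑ n ∈ Finset.range N, g n
      = 1 - ((harmonic (N + 1) : ℝ) - Real.log ((N : ℝ) + 1)) := by
    intro N
    have hlogsum : ∑ n ∈ Finset.range N, (Real.log ((n : ℝ) + 2) - Real.log ((n : ℝ) + 1))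
        = Real.log ((N : ℝ) + 1) := by
      have := Finset.sum_range_sub (f := fun i : ℕ => Real.log ((i : ℝ) + 1)) N
      simp only [Nat.cast_zero, zero_add, Real.log_one, sub_zero] at this
      rw [← this]
      exact Finset.sum_congr rfl fun i _ => by push_cast; ring_nf
    have hharm : (harmonic (N + 1) : ℝ) = 1 + ∑ n ∈ Finset.range N, 1 / ((n : ℝ) + 2) := by
      rw [harmonic]
      push_cast
      rw [Finset.sum_range_succ']
      push_cast
      ring_nf
    calc ∑ n ∈ Finset.range N, g n
        = ∑ n ∈ Finset.range N, (Real.log ((n : ℝ) + 2) - Real.log ((n : ℝ) + 1))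
          - ∑ n ∈ Finset.range N, 1 / ((n : ℝ) + 2) := by
          rw [← Finset.sum_sub_distrib]
      _ = 1 - ((harmonic (N + 1) : ℝ) - Real.log ((N : ℝ) + 1)) := by
          rw [hlogsum, hharm]; ring
  have htendsto : Tendsto (fun N : ℕ => ∑ n ∈ Finset.range N, g n) atTop
      (nhds (1 - Real.eulerMascheroniConstant)) := by
    simp only [hpartial]
    have h1 : Tendsto (fun N : ℕ => (harmonic (N + 1) : ℝ) - Real.log ((N : ℝ) + 1)) atTop
        (nhds Real.eulerMascheroniConstant) := by
      have := Real.tendsto_harmonic_sub_log.comp (tendsto_add_atTop_nat 1)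
      refine this.congr fun N => ?_
      simp only [Function.comp_apply]
      push_cast
      try ring_nf
    exact (tendsto_const_nhds.sub h1)
  have hS1 : S = 1 - Real.eulerMascheroniConstant :=
    tendsto_nhds_unique hgS.tendsto_sum_nat htendsto
  -- swap the order of summation
  have hswap : HasSum (fun p : ℕ × ℕ => F p.swap) S := by
    exact ((Equiv.prodComm ℕ ℕ).hasSum_iff).2 hFsum
  have hfinal : HasSum (fun k : ℕ => (zetaNat (k + 2) - 1) / ((k : ℝ) + 2)) S :=
    hswap.prod_fiberwise fun k => aux_fiber_k k
  rwa [hS1] at hfinal
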